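/- Let A be a real n×n matrix with xᵀAx > 0 for all nonzero real x, C a real m×m symmetric positive semidefinite matrix, B a real m×n matrix of full row rank, α, β > 0, M = (1/2)·[[αI + A, Bᵀ], [−B, βI + C]] and N = (1/2)·[[αI − A, −Bᵀ], [B, βI − C]]. Suppose λ ∈ ℂ and u = (x; y) ∈ ℂ^{n+m} is a nonzero vector with N u = λ M u, and suppose moreover that Bx = 0. Then (α − x*Ax)·x*x = λ·(α + x*Ax)·x*x, and consequently |λ| = |α − x*Ax| / |α + x*Ax| < 1 (using x ≠ 0 and the normalization x*x = ‖x‖² > 0). -/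

import Mathlib

open Matrix

/-- The shift-splitting matrix `M = (1/2)⬝[[αI + A, Bᵀ], [−B, βI + C]]`. -/
noncomputable def MSS {n m : ℕ} (A : Matrix (Fin n) (Fin n) ℝ) (B : Matrix (Fin m) (Fin n) ℝ)
    (C : Matrix (Fin m) (Fin m) ℝ) (α β : ℝ) :
    Matrix (Fin n ⊕ Fin m) (Fin n ⊕ Fin m) ℝ :=
  (1 / 2 : ℝ) • Matrix.fromBlocks (α • (1 : Matrix (Fin n) (Fin n) ℝ) + A) Bᵀ (-B)
    (β • (1 : Matrix (Fin m) (Fin m) ℝ) + C)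

/-- The shift-splitting matrix `N = (1/2)⬝[[αI − A, −Bᵀ], [B, βI − C]]`. -/
noncomputable def NSS {n m : ℕ} (A : Matrix (Fin n) (Fin n) ℝ) (B : Matrix (Fin m) (Fin n) ℝ)
    (C : Matrix (Fin m) (Fin m) ℝ) (α β : ℝ) :
    Matrix (Fin n ⊕ Fin m) (Fin n ⊕ Fin m) ℝ :=
  (1 / 2 : ℝ) • Matrix.fromBlocks (α • (1 : Matrix (Fin n) (Fin n) ℝ) - A) (-Bᵀ) B
    (β • (1 : Matrix (Fin m) (Fin m) ℝ) - C)

section Aux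

variable {n m : ℕ} (A : Matrix (Fin n) (Fin n) ℝ) (B : Matrix (Fin m) (Fin n) ℝ)
    (C : Matrix (Fin m) (Fin m) ℝ) (α β : ℝ) (u : Fin n ⊕ Fin m → ℂ)

lemma NSS_mulVec_inl (i : Fin n) :
    ((NSS A B C α β).map Complex.ofReal).mulVec u (Sum.inl i)
    = (1/2 : ℂ) * ((α:ℂ) * u (Sum.inl i)
        - (A.map Complex.ofReal).mulVec (fun k => u (Sum.inl k)) i
        - ((Bᵀ).map Complex.ofReal).mulVec (fun k => u (Sum.inr k)) i) := by
  simp [NSS, mulVec, dotProduct, Fintype.sum_sum_type, Matrix.fromBlocks, Matrix.one_apply,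
    Finset.mul_sum, Finset.sum_sub_distrib, mul_sub, sub_mul, mul_add, add_mul, Pi.smul_apply,
    smul_eq_mul, mul_comm, mul_left_comm, apply_ite]
  ring_nf

lemma MSS_mulVec_inl (i : Fin n) :
    ((MSS A B C α β).map Complex.ofReal).mulVec u (Sum.inl i)
    = (1/2 : ℂ) * ((α:ℂ) * u (Sum.inl i)
        + (A.map Complex.ofReal).mulVec (fun k => u (Sum.inl k)) i
        + ((Bᵀ).map Complex.ofReal).mulVec (fun k => u (Sum.inr k)) i) := by
  simp [MSS, mulVec, dotProduct, Fintype.sum_sum_type, Matrix.fromBlocks, Matrix.one_apply,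
    Finset.mul_sum, Finset.sum_add_distrib, mul_sub, sub_mul, mul_add, add_mul, Pi.smul_apply,
    smul_eq_mul, mul_comm, mul_left_comm, apply_ite]
  ring_nf

lemma NSS_mulVec_inr (j : Fin m) :
    ((NSS A B C α β).map Complex.ofReal).mulVec u (Sum.inr j)
    = (1/2 : ℂ) * ((B.map Complex.ofReal).mulVec (fun k => u (Sum.inl k)) j
        + (β:ℂ) * u (Sum.inr j)
        - (C.map Complex.ofReal).mulVec (fun k => u (Sum.inr k)) j) := by
  simp [NSS, mulVec, dotProduct, Fintype.sum_sum_type, Matrix.fromBlocks, Matrix.one_apply,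
    Finset.mul_sum, Finset.sum_sub_distrib, mul_sub, sub_mul, mul_add, add_mul, Pi.smul_apply,
    smul_eq_mul, mul_comm, mul_left_comm, apply_ite]
  ring_nf

lemma MSS_mulVec_inr (j : Fin m) :
    ((MSS A B C α β).map Complex.ofReal).mulVec u (Sum.inr j)
    = (1/2 : ℂ) * (-((B.map Complex.ofReal).mulVec (fun k => u (Sum.inl k)) j)
        + (β:ℂ) * u (Sum.inr j)
        + (C.map Complex.ofReal).mulVec (fun k => u (Sum.inr k)) j) := by
  simp [MSS, mulVec, dotProduct, Fintype.sum_sum_type, Matrix.fromBlocks, Matrix.one_apply,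
    Finset.mul_sum, Finset.sum_add_distrib, mul_sub, sub_mul, mul_add, add_mul, Pi.smul_apply,
    smul_eq_mul, mul_comm, mul_left_comm, apply_ite]
  ring_nf

end Aux

theorem eigenvalue_formula_of_Bx_eq_zero
    (n m : ℕ) (A : Matrix (Fin n) (Fin n) ℝ)
    (hA : ∀ x : Fin n → ℝ, x ≠ 0 → 0 < x ⬝ᵥ A.mulVec x)
    (C : Matrix (Fin m) (Fin m) ℝ) (hC : C.PosSemidef)
    (B : Matrix (Fin m) (Fin n) ℝ) (hB : B.rank = m)
    (α β : ℝ) (hα : 0 < α) (hβ : 0 < β)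
    (lam : ℂ) (u : Fin n ⊕ Fin m → ℂ) (hu : u ≠ 0)
    (heig : ((NSS A B C α β).map Complex.ofReal).mulVec u
      = lam • ((MSS A B C α β).map Complex.ofReal).mulVec u)
    (x : Fin n → ℂ) (hx : x = fun i : Fin n => u (Sum.inl i))
    (hBx : (B.map Complex.ofReal).mulVec x = 0)
    (p s : ℂ) (hp : p = star x ⬝ᵥ (A.map Complex.ofReal).mulVec x)
    (hs : s = star x ⬝ᵥ x) :
    ((α : ℂ) - p / s) * s = lam * (((α : ℂ) + p / s) * s) ∧
      ‖lam‖
        = ‖(α : ℂ) - p / s‖ / ‖(α : ℂ) + p / s‖ ∧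
      ‖lam‖ < 1 := by
  set y : Fin m → ℂ := fun j => u (Sum.inr j) with hy
  -- abbreviations
  set Ac := A.map Complex.ofReal with hAc
  set Bc := B.map Complex.ofReal with hBc
  set Cc := C.map Complex.ofReal with hCc
  set Btc := (Bᵀ).map Complex.ofReal with hBtc
  -- scalar component equations
  have htop : ∀ i, (α:ℂ) * x i - Ac.mulVec x i - Btc.mulVec y i
      = lam * ((α:ℂ) * x i + Ac.mulVec x i + Btc.mulVec y i) := by
    intro i
    have h := congrFun heig (Sum.inl i)
    rw [NSS_mulVec_inl, Pi.smul_apply, MSS_mulVec_inl, smul_eq_mul] at h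
    have hxi : u (Sum.inl i) = x i := by rw [hx]
    rw [← hAc, ← hBtc, ← hy, ← hx, hxi] at h
    linear_combination 2 * h
  have hbot : ∀ j, Bc.mulVec x j + (β:ℂ) * y j - Cc.mulVec y j
      = lam * (-(Bc.mulVec x j) + (β:ℂ) * y j + Cc.mulVec y j) := by
    intro j
    have h := congrFun heig (Sum.inr j)
    rw [NSS_mulVec_inr, Pi.smul_apply, MSS_mulVec_inr, smul_eq_mul] at h
    have hyj : u (Sum.inr j) = y j := by rw [hy]
    rw [← hx, ← hBc, ← hCc, ← hy, hyj] at h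
    linear_combination 2 * h
  -- B-row injectivity over ℝ
  have hBinj : Function.Injective B.vecMul := by
    rw [Matrix.vecMul_injective_iff]
    rw [linearIndependent_iff_card_eq_finrank_span]
    rw [Set.finrank, ← Matrix.rank_eq_finrank_span_row, hB, Fintype.card_fin]
  -- x is nonzero
  have hx0 : x ≠ 0 := by
    intro h0
    -- y ≠ 0
    have hy0 : y ≠ 0 := by
      intro hy0
      apply hu
      funext k
      cases k with
      | inl i =>
        have := congrFun h0 i
        rw [hx] at this; exact this
      | inr j => exact congrFun hy0 j
    -- t > 0
    set t : ℂ := star y ⬝ᵥ y with ht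
    have ht_eq : t = ((∑ j, Complex.normSq (y j) : ℝ) : ℂ) := by
      rw [ht]
      simp only [dotProduct, Pi.star_apply, Complex.star_def]
      push_cast
      refine Finset.sum_congr rfl fun j _ => ?_
      rw [mul_comm, Complex.mul_conj]
    have ht_ne : t ≠ 0 := by
      rw [ht_eq]
      norm_cast
      obtain ⟨j, hj⟩ := Function.ne_iff.mp hy0
      have : (0:ℝ) < ∑ j, Complex.normSq (y j) :=
        Finset.sum_pos' (fun j _ => Complex.normSq_nonneg _)
          ⟨j, Finset.mem_univ j, Complex.normSq_pos.2 hj⟩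
      exact ne_of_gt this
    -- the bottom equation with x = 0
    have hBx0 : Bc.mulVec x = 0 := hBx
    have hbot' : (β:ℂ) * (star y ⬝ᵥ y) - star y ⬝ᵥ Cc.mulVec y
        = lam * ((β:ℂ) * (star y ⬝ᵥ y) + star y ⬝ᵥ Cc.mulVec y) := by
      have h1 : ∑ j, star (y j) * (Bc.mulVec x j + (β:ℂ) * y j - Cc.mulVec y j)
          = ∑ j, star (y j) * (lam * (-(Bc.mulVec x j) + (β:ℂ) * y j + Cc.mulVec y j)) :=
        Finset.sum_congr rfl fun j _ => by rw [hbot j]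
      have hz : ∀ j, Bc.mulVec x j = 0 := fun j => congrFun hBx0 j
      simp only [hz, zero_add, neg_zero, add_zero] at h1
      simpa [dotProduct, mul_sub, mul_add, Finset.sum_sub_distrib, Finset.sum_add_distrib,
        Finset.mul_sum, mul_comm, mul_left_comm, mul_assoc] using h1
    -- lam ≠ -1
    have hlam : lam ≠ -1 := by
      intro hl
      rw [hl] at hbot'
      have : (2:ℂ) * (β:ℂ) * t = 0 := by
        rw [ht]; linear_combination hbot'
      have hb2 : ((2:ℂ) * (β:ℂ)) ≠ 0 := by
        norm_cast
        positivity
      exact ht_ne (by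
        rcases mul_eq_zero.mp this with h | h
        · exact absurd h hb2
        · exact h)
    -- top equation with x = 0 gives Bᵀy = 0
    have hBty : ∀ i, Btc.mulVec y i = 0 := by
      intro i
      have h := htop i
      rw [h0] at h
      simp only [Pi.zero_apply, mul_zero, Matrix.mulVec_zero] at h
      simp only [Pi.zero_apply, zero_sub, zero_add] at h
      have h2 : (1 + lam) * Btc.mulVec y i = 0 := by linear_combination -h
      rcases mul_eq_zero.mp h2 with h3 | h3
      · exfalso; apply hlam; linear_combination h3
      · exact h3
    -- deduce y = 0 via full row rank, contradiction
    apply hy0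
    set yr : Fin m → ℝ := fun j => (y j).re with hyr
    set yi : Fin m → ℝ := fun j => (y j).im with hyi
    have hsum : ∀ i, (∑ j, ((B j i : ℂ)) * y j) = 0 := by
      intro i
      have := hBty i
      simpa [Matrix.mulVec, dotProduct, hBtc, Matrix.map_apply, Matrix.transpose_apply] using this
    have hre : B.vecMul yr = B.vecMul 0 := by
      funext i
      have := congrArg Complex.re (hsum i)
      simpa [Complex.re_sum, Complex.mul_re, Matrix.vecMul, dotProduct, hyr,
        mul_comm] using this
    have him : B.vecMul yi = B.vecMul 0 := by
      funext i
      have := congrArg Complex.im (hsum i)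
      simpa [Complex.im_sum, Complex.mul_im, Matrix.vecMul, dotProduct, hyi,
        mul_comm] using this
    have hyr0 : yr = 0 := hBinj hre
    have hyi0 : yi = 0 := hBinj him
    funext j
    have h1 : (y j).re = 0 := congrFun hyr0 j
    have h2 : (y j).im = 0 := congrFun hyi0 j
    exact Complex.ext h1 h2
  -- s is a positive real
  have hs_eq : s = ((∑ i, Complex.normSq (x i) : ℝ) : ℂ) := by
    rw [hs]
    simp only [dotProduct, Pi.star_apply, Complex.star_def]
    push_cast
    refine Finset.sum_congr rfl fun i _ => ?_
    rw [mul_comm, Complex.mul_conj]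
  have hsre_pos : (0:ℝ) < ∑ i, Complex.normSq (x i) := by
    obtain ⟨i, hi⟩ := Function.ne_iff.mp hx0
    exact Finset.sum_pos' (fun i _ => Complex.normSq_nonneg _)
      ⟨i, Finset.mem_univ i, Complex.normSq_pos.2 hi⟩
  have hs_ne : s ≠ 0 := by
    rw [hs_eq]; norm_cast; exact ne_of_gt hsre_pos
  -- the key scalar identity
  have hq : star x ⬝ᵥ Btc.mulVec y = 0 := by
    have h1 : Bc.mulVec (star x) = 0 := by
      have : Bc.mulVec (star x) = star (Bc.mulVec x) := by
        funext j
        simp only [Matrix.mulVec, dotProduct, Pi.star_apply, Complex.star_def, _root_.map_sum, _root_.map_mul,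
          hBc, Matrix.map_apply, Complex.conj_ofReal]
      rw [this, hBx]
      simp
    rw [Matrix.dotProduct_mulVec]
    have h2 : Matrix.vecMul (star x) Btc = Bc.mulVec (star x) := by
      rw [hBtc, hBc]
      rw [show (Bᵀ.map Complex.ofReal) = (B.map Complex.ofReal)ᵀ from rfl]
      exact Matrix.vecMul_transpose _ _
    rw [h2, h1]
    simp
  have hkey : (α:ℂ) * s - p = lam * ((α:ℂ) * s + p) := by
    have h1 : ∑ i, star (x i) * ((α:ℂ) * x i - Ac.mulVec x i - Btc.mulVec y i)
        = ∑ i, star (x i) * (lam * ((α:ℂ) * x i + Ac.mulVec x i + Btc.mulVec y i)) :=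
      Finset.sum_congr rfl fun i _ => by rw [htop i]
    have e1 : ∑ i, star (x i) * ((α:ℂ) * x i - Ac.mulVec x i - Btc.mulVec y i)
        = (α:ℂ) * s - p - star x ⬝ᵥ Btc.mulVec y := by
      simp only [hs, hp, dotProduct, Finset.mul_sum, Pi.star_apply]
      rw [← Finset.sum_sub_distrib, ← Finset.sum_sub_distrib]
      exact Finset.sum_congr rfl fun i _ => by ring
    have e2 : ∑ i, star (x i) * (lam * ((α:ℂ) * x i + Ac.mulVec x i + Btc.mulVec y i))
        = lam * ((α:ℂ) * s + p + star x ⬝ᵥ Btc.mulVec y) := by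
      simp only [hs, hp, dotProduct, Finset.mul_sum, mul_add, Pi.star_apply]
      rw [← Finset.sum_add_distrib, ← Finset.sum_add_distrib]
      exact Finset.sum_congr rfl fun i _ => by ring
    rw [e1, e2, hq] at h1
    simpa using h1
  -- real part of p is positive
  set xr : Fin n → ℝ := fun i => (x i).re with hxr
  set ximg : Fin n → ℝ := fun i => (x i).im with hximg
  have hpre : p.re = xr ⬝ᵥ A.mulVec xr + ximg ⬝ᵥ A.mulVec ximg := by
    have h0 : p.re = ∑ i, (star (x i) * (Ac.mulVec x) i).re := by
      rw [hp, dotProduct, Complex.re_sum]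
      exact Finset.sum_congr rfl fun i _ => by rw [Pi.star_apply]
    rw [h0, dotProduct, dotProduct, ← Finset.sum_add_distrib]
    refine Finset.sum_congr rfl fun i _ => ?_
    have hre : ((Ac.mulVec x) i).re = (A.mulVec xr) i := by
      simp [hAc, Matrix.mulVec, dotProduct, Complex.re_sum, Complex.mul_re, hxr,
        Matrix.map_apply]
    have him : ((Ac.mulVec x) i).im = (A.mulVec ximg) i := by
      simp [hAc, Matrix.mulVec, dotProduct, Complex.im_sum, Complex.mul_im, hximg,
        Matrix.map_apply]
    rw [Complex.mul_re, hre, him]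
    simp only [Pi.star_apply, Complex.star_def, Complex.conj_re, Complex.conj_im, hxr, hximg]
    ring
  have hpre_pos : 0 < p.re := by
    rw [hpre]
    have hxcases : xr ≠ 0 ∨ ximg ≠ 0 := by
      by_contra hcon
      push_neg at hcon
      apply hx0
      funext i
      exact Complex.ext (congrFun hcon.1 i) (congrFun hcon.2 i)
    have hnn : ∀ v : Fin n → ℝ, 0 ≤ v ⬝ᵥ A.mulVec v := by
      intro v
      rcases eq_or_ne v 0 with h | h
      · simp [h]
      · exact le_of_lt (hA v h)
    rcases hxcases with h | h
    · have := hA xr h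
      have := hnn ximg
      linarith
    · have := hA ximg h
      have := hnn xr
      linarith
  -- set a := s.re as real
  set a : ℝ := ∑ i, Complex.normSq (x i) with ha
  have hs_re : s = (a:ℂ) := hs_eq
  -- denominators nonzero
  have hd_re : ((α:ℂ) * s + p).re = α * a + p.re := by
    rw [hs_re]; simp
  have hd_pos : 0 < ((α:ℂ) * s + p).re := by
    rw [hd_re]
    have : 0 < α * a := mul_pos hα hsre_pos
    linarith
  have hd_ne : (α:ℂ) * s + p ≠ 0 := by
    intro h
    rw [h] at hd_pos
    simp at hd_pos
  -- Goal 1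
  have e1 : ((α:ℂ) - p / s) * s = (α:ℂ) * s - p := by field_simp
  have e2 : ((α:ℂ) + p / s) * s = (α:ℂ) * s + p := by field_simp
  have goal1 : ((α : ℂ) - p / s) * s = lam * (((α : ℂ) + p / s) * s) := by
    rw [e1, e2]; exact hkey
  refine ⟨goal1, ?_, ?_⟩
  · -- abs formula
    have hlam_eq : lam = ((α:ℂ) * s - p) / ((α:ℂ) * s + p) := by
      rw [eq_div_iff hd_ne]
      linear_combination -hkey
    rw [hlam_eq]
    have h1 : (α:ℂ) - p / s = ((α:ℂ) * s - p) / s := by field_simp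
    have h2 : (α:ℂ) + p / s = ((α:ℂ) * s + p) / s := by field_simp
    rw [h1, h2, norm_div, norm_div, norm_div]
    have hs0 : ‖s‖ ≠ 0 := by simp [hs_ne]
    have hd0 : ‖(α:ℂ) * s + p‖ ≠ 0 := by simp [hd_ne]
    field_simp
  · -- abs lam < 1
    have habs : ‖(α:ℂ) * s - p‖ < ‖(α:ℂ) * s + p‖ := by
      rw [Complex.norm_def, Complex.norm_def]
      apply Real.sqrt_lt_sqrt (Complex.normSq_nonneg _)
      rw [hs_re]
      simp only [Complex.normSq_apply, Complex.add_re, Complex.add_im, Complex.sub_re,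
        Complex.sub_im, Complex.mul_re, Complex.mul_im, Complex.ofReal_re, Complex.ofReal_im]
      nlinarith [mul_pos (mul_pos hα hsre_pos) hpre_pos]
    have hlam_eq : lam = ((α:ℂ) * s - p) / ((α:ℂ) * s + p) := by
      rw [eq_div_iff hd_ne]
      linear_combination -hkey
    rw [hlam_eq, norm_div]
    exact (div_lt_one (norm_pos_iff.mpr hd_ne)).mpr habs
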